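/- arXiv:quant-ph/9908033 — 8 statements merged into one kernel-verified Lean document; each statement's English description precedes it below -/
import Mathlib

section
/- Let H be a complex Hilbert space and let Q, P : H →ₗ.[ℂ] H be linear partial maps with Q symmetric. Suppose φ ∈ Q.domain ∩ P.domain, P φ ∈ Q.domain, Q φ ∈ P.domain, the canonical commutation relation Q (P φ) − P (Q φ) = Complex.I • φ holds at φ, and Q φ = a • φ for some real number a. Then φ = 0. (Eigenvectors of either member of a canonical pair do not belong to the canonical domain.) -/
open scoped ComplexInnerProductSpace

theorem eigenvector_not_in_canonical_domain
    {H : Type*} [NormedAddCommGroup H] [InnerProductSpace ℂ H] [CompleteSpace H]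
    (Q P : H →ₗ.[ℂ] H)
    (hQ : ∀ x y : Q.domain, ⟪Q x, (y : H)⟫ = ⟪(x : H), Q y⟫)
    (φ : H) (hφQ : φ ∈ Q.domain) (hφP : φ ∈ P.domain)
    (hPφ : P ⟨φ, hφP⟩ ∈ Q.domain) (hQφ : Q ⟨φ, hφQ⟩ ∈ P.domain)
    (hccr : Q ⟨P ⟨φ, hφP⟩, hPφ⟩ - P ⟨Q ⟨φ, hφQ⟩, hQφ⟩ = Complex.I • φ)
    (a : ℝ) (hEig : Q ⟨φ, hφQ⟩ = (a : ℂ) • φ) :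
    φ = 0 := by
  set c : ℂ := ⟪φ, P ⟨φ, hφP⟩⟫ with hc
  have h1 : ⟪φ, Q ⟨P ⟨φ, hφP⟩, hPφ⟩⟫ = (a : ℂ) * c := by
    have := (hQ ⟨φ, hφQ⟩ ⟨P ⟨φ, hφP⟩, hPφ⟩).symm
    simp only at this
    rw [this, hEig, inner_smul_left]
    simp [hc]
  have hsub : (⟨Q ⟨φ, hφQ⟩, hQφ⟩ : P.domain) = (a : ℂ) • ⟨φ, hφP⟩ := by
    ext
    simpa using hEig
  have h2 : ⟪φ, P ⟨Q ⟨φ, hφQ⟩, hQφ⟩⟫ = (a : ℂ) * c := by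
    rw [hsub, P.map_smul, inner_smul_right]
  have key : (0 : ℂ) = Complex.I * ⟪φ, φ⟫ := by
    have := congrArg (fun x => ⟪φ, x⟫) hccr
    simp only [inner_sub_right, inner_smul_right, h1, h2, sub_self] at this
    exact this
  have h0 : (⟪φ, φ⟫ : ℂ) = 0 := by
    rcases mul_eq_zero.mp key.symm with h | h
    · exact absurd h Complex.I_ne_zero
    · exact h
  exact inner_self_eq_zero.mp h0
end

section
/- Let H be a complex Hilbert space and let Q, P : H →L[ℂ] H be self-adjoint continuous linear maps (IsSelfAdjoint Q and IsSelfAdjoint P). Let D be a submodule of H such that Q maps D into D and Q (P φ) − P (Q φ) = Complex.I • φ for all φ ∈ D. Then D = ⊥. (A canonical pair whose canonical domain is invariant under one member cannot consist of two bounded, everywhere-defined operators.) -/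
lemma wielandt_aux {A : Type*} [NormedRing A] [NormedAlgebra ℂ A]
    (p q r : A) (hqp : q * p = q) (hpq : p * q = q)
    (hcomm : q * r - r * q = Complex.I • p) : p = 0 := by
  have hqp' : ∀ m : ℕ, q ^ (m + 1) * p = q ^ (m + 1) := fun m => by
    rw [pow_succ, mul_assoc, hqp]
  have hqn : ∀ n : ℕ, q * (q ^ n * p) = q ^ (n + 1) := fun n => by
    rw [← mul_assoc, ← pow_succ', hqp']
  have key : ∀ n : ℕ, q ^ (n + 1) * r - r * q ^ (n + 1)
      = (((n : ℂ) + 1) * Complex.I) • (q ^ n * p) := by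
    intro n
    induction n with
    | zero => simpa using hcomm
    | succ n ih =>
      have e1 : q ^ (n + 2) * r - r * q ^ (n + 2)
          = q * (q ^ (n + 1) * r - r * q ^ (n + 1)) + (q * r - r * q) * q ^ (n + 1) := by
        have : q ^ (n + 2) = q * q ^ (n + 1) := (pow_succ' q (n + 1))
        rw [this]; noncomm_ring
      have e3 : p * q ^ (n + 1) = q ^ (n + 1) * p := by
        rw [pow_succ', ← mul_assoc, hpq, ← pow_succ', hqp']
      rw [e1, ih, hcomm, mul_smul_comm, smul_mul_assoc, hqn, e3, hqp', ← add_smul]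
      congr 1
      push_cast
      ring
  have hnorm : ∀ n : ℕ, ‖(((n : ℂ) + 1) * Complex.I)‖ = (n : ℝ) + 1 := by
    intro n
    rw [norm_mul, Complex.norm_I, mul_one]
    have : ((n : ℂ) + 1) = ((n + 1 : ℕ) : ℂ) := by push_cast; ring
    rw [this, Complex.norm_natCast]
    push_cast; ring
  have hzero : ∀ n : ℕ, ((n : ℝ) + 1) * ‖q ^ n * p‖ ≤ 2 * ‖q‖ * ‖r‖ * ‖q ^ n * p‖ := by
    intro n
    calc ((n : ℝ) + 1) * ‖q ^ n * p‖ = ‖(((n : ℂ) + 1) * Complex.I) • (q ^ n * p)‖ := by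
          rw [norm_smul, hnorm]
      _ = ‖q ^ (n + 1) * r - r * q ^ (n + 1)‖ := by rw [key n]
      _ ≤ ‖q ^ (n + 1) * r‖ + ‖r * q ^ (n + 1)‖ := norm_sub_le _ _
      _ ≤ ‖q ^ (n + 1)‖ * ‖r‖ + ‖r‖ * ‖q ^ (n + 1)‖ := by
          gcongr <;> [exact norm_mul_le _ _; exact norm_mul_le _ _]
      _ ≤ 2 * ‖q‖ * ‖r‖ * ‖q ^ n * p‖ := by
          rw [← hqn]
          have := norm_mul_le q (q ^ n * p)
          nlinarith [norm_nonneg r, norm_nonneg (q ^ n * p), norm_nonneg q]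
  obtain ⟨n, hn⟩ := exists_nat_gt (2 * ‖q‖ * ‖r‖)
  have hsn : q ^ n * p = 0 := by
    by_contra h
    have hpos : 0 < ‖q ^ n * p‖ := norm_pos_iff.2 h
    have := hzero n
    nlinarith
  have descend : ∀ m : ℕ, q ^ m * p = 0 → p = 0 := by
    intro m
    induction m with
    | zero => simpa using id
    | succ m ih =>
      intro h
      have h0 : q ^ (m + 1) = 0 := by rw [← hqp', h]
      have := key m
      rw [h0, zero_mul, mul_zero, sub_zero] at this
      have hne : ((m : ℂ) + 1) * Complex.I ≠ 0 := by
        apply mul_ne_zero _ Complex.I_ne_zero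
        exact Nat.cast_add_one_ne_zero m
      exact ih ((smul_eq_zero.mp this.symm).resolve_left hne)
  exact descend n hsn

theorem canonical_pair_invariant_domain_not_both_bounded
    {H : Type*} [NormedAddCommGroup H] [InnerProductSpace ℂ H] [CompleteSpace H]
    (Q P : H →L[ℂ] H) (hQ : IsSelfAdjoint Q) (hP : IsSelfAdjoint P)
    (D : Submodule ℂ H)
    (hQD : ∀ φ ∈ D, Q φ ∈ D)
    (hccr : ∀ φ ∈ D, Q (P φ) - P (Q φ) = Complex.I • φ) :
    D = ⊥ := by
  set K := D.topologicalClosure with hKdef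
  haveI : CompleteSpace K := D.isClosed_topologicalClosure.completeSpace_coe
  set p : H →L[ℂ] H := K.subtypeL.comp (K.orthogonalProjectionOnto) with hpdef
  have hp_apply : ∀ x ∈ K, p x = x := fun x hx => by
    exact Submodule.starProjection_eq_self_iff.2 hx
  have hp_mem : ∀ x, p x ∈ K := fun x => (K.orthogonalProjectionOnto x).2
  have hKcl : (K : Set H) = closure (D : Set H) := rfl
  have hQK : ∀ x ∈ K, Q x ∈ K := by
    intro x hx
    have h0 : Q x ∈ closure (D : Set H) :=
      map_mem_closure Q.continuous (hKcl ▸ hx) (fun y hy => hQD y hy)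
    show Q x ∈ (K : Set H)
    rw [hKcl]; exact h0
  have hp_sa : IsSelfAdjoint p := isSelfAdjoint_starProjection K
  set q : H →L[ℂ] H := Q * p with hq
  set r : H →L[ℂ] H := p * P * p with hr
  have hpp : p * p = p := by
    ext x
    exact hp_apply _ (hp_mem x)
  have hpq : p * q = q := by
    ext x
    simp only [hq, ContinuousLinearMap.mul_apply]
    exact hp_apply _ (hQK _ (hp_mem x))
  have hqp : q * p = q := by rw [hq, mul_assoc, hpp]
  have hQp_comm : p * Q = Q * p := by
    have h2 : p * Q * p = Q * p := by rw [mul_assoc]; exact hpq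
    have h3 : star (p * Q * p) = p * Q * p := by
      simp only [star_mul, hp_sa.star_eq, hQ.star_eq, mul_assoc]
    calc p * Q = star (Q * p) := by rw [star_mul, hp_sa.star_eq, hQ.star_eq]
      _ = star (p * Q * p) := by rw [h2]
      _ = p * Q * p := h3
      _ = Q * p := h2
  have hKccr : ∀ y ∈ K, p (Q (P y)) - p (P (Q y)) = Complex.I • y := by
    have hcl : IsClosed {y : H | p (Q (P y)) - p (P (Q y)) = Complex.I • y} := by
      apply isClosed_eq
      · exact (p.continuous.comp (Q.continuous.comp P.continuous)).sub
          (p.continuous.comp (P.continuous.comp Q.continuous))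
      · exact continuous_const.smul continuous_id
    have hsub : (D : Set H) ⊆ {y : H | p (Q (P y)) - p (P (Q y)) = Complex.I • y} := by
      intro φ hφ
      have h := hccr φ hφ
      have hφK : φ ∈ K := D.le_topologicalClosure hφ
      calc p (Q (P φ)) - p (P (Q φ)) = p (Q (P φ) - P (Q φ)) := (map_sub p _ _).symm
        _ = p (Complex.I • φ) := by rw [h]
        _ = Complex.I • p φ := map_smul p _ _
        _ = Complex.I • φ := by rw [hp_apply φ hφK]
    intro y hy
    exact (closure_minimal hsub hcl) (hKcl ▸ hy)
  have hcomm : q * r - r * q = Complex.I • p := by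
    ext x
    simp only [hq, hr, ContinuousLinearMap.sub_apply, ContinuousLinearMap.mul_apply,
      ContinuousLinearMap.smul_apply]
    rw [hp_apply (p (P (p x))) (hp_mem _), hp_apply (Q (p x)) (hQK _ (hp_mem x))]
    have hmove : Q (p (P (p x))) = p (Q (P (p x))) := by
      have := congrFun (congrArg DFunLike.coe hQp_comm) (P (p x))
      simpa [ContinuousLinearMap.mul_apply] using this.symm
    rw [hmove]
    exact hKccr (p x) (hp_mem x)
  have hp0 : p = 0 := wielandt_aux p q r hqp hpq hcomm
  rw [eq_bot_iff]
  intro φ hφ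
  have h1 : p φ = φ := hp_apply φ (D.le_topologicalClosure hφ)
  rw [hp0] at h1
  simpa using h1.symm
end

section
/- Define f : ℝ → ℂ by f q = Complex.I * q^2 − (2 * Real.sqrt 5)/15 − Complex.I/3, and for g : ℝ → ℂ define (P g) q = ∫ q' in (0:ℝ)..1, (3 * Real.sqrt 5 / 2) * (q + q') * g q' (interval integral). Then for every q : ℝ, q * (P f) q − (P (fun q' => q' * f q')) q = Complex.I * f q. (The multiplication operator Q and the integral operator P with kernel (3√5/2)(q+q') on L²[0,1] satisfy the canonical commutation relation (QP − PQ)φ = iφ on the one-dimensional subspace spanned by f, even though both operators are bounded, everywhere defined and self-adjoint.) -/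
/-- The function spanning the one-dimensional canonical domain. -/
noncomputable def fvec (q : ℝ) : ℂ :=
  Complex.I * (q : ℂ) ^ 2 - ((2 * Real.sqrt 5) / 15 : ℝ) - Complex.I / 3

/-- The integral operator with kernel `(3√5/2)(q + q')` on `L²[0,1]`. -/
noncomputable def Pop (g : ℝ → ℂ) (q : ℝ) : ℂ :=
  ∫ q' in (0:ℝ)..1, ((3 * Real.sqrt 5 / 2 : ℝ) : ℂ) * ((q : ℂ) + (q' : ℂ)) * g q'

private lemma int_pow (n : ℕ) : (∫ x in (0:ℝ)..1, ((x:ℂ))^n) = 1/(n+1) := by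
  have h : (∫ x in (0:ℝ)..1, ((x:ℂ))^n) = (((∫ x in (0:ℝ)..1, x^n : ℝ)) : ℂ) := by
    rw [← intervalIntegral.integral_ofReal]
    norm_num
  rw [h, integral_pow]
  push_cast
  norm_num

private lemma int_mono (c : ℂ) (n : ℕ) :
    (∫ x in (0:ℝ)..1, c * ((x:ℂ))^n) = c / (n+1) := by
  rw [intervalIntegral.integral_const_mul, int_pow]
  ring

private lemma ii_mono (c : ℂ) (n : ℕ) :
    IntervalIntegrable (fun x : ℝ => c * ((x:ℂ))^n) MeasureTheory.volume 0 1 := by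
  apply Continuous.intervalIntegrable
  fun_prop

private lemma int_quartic (c0 c1 c2 c3 c4 : ℂ) :
    (∫ x in (0:ℝ)..1,
      (c0 * ((x:ℂ))^0 + c1 * (x:ℂ)^1 + c2 * (x:ℂ)^2 + c3 * (x:ℂ)^3 + c4 * (x:ℂ)^4))
      = c0 + c1/2 + c2/3 + c3/4 + c4/5 := by
  rw [intervalIntegral.integral_add ((((ii_mono c0 0).add (ii_mono c1 1)).add
        (ii_mono c2 2)).add (ii_mono c3 3)) (ii_mono c4 4),
      intervalIntegral.integral_add (((ii_mono c0 0).add (ii_mono c1 1)).add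
        (ii_mono c2 2)) (ii_mono c3 3),
      intervalIntegral.integral_add ((ii_mono c0 0).add (ii_mono c1 1)) (ii_mono c2 2),
      intervalIntegral.integral_add (ii_mono c0 0) (ii_mono c1 1),
      int_mono, int_mono, int_mono, int_mono, int_mono]
  push_cast
  ring

theorem bounded_selfadjoint_pair_ccr_on_closed_subspace :
    ∀ q : ℝ,
      (q : ℂ) * Pop fvec q - Pop (fun q' => (q' : ℂ) * fvec q') q
        = Complex.I * fvec q := by
  intro q
  have hc : True := trivial
  let c : ℂ := ((3 * Real.sqrt 5 / 2 : ℝ) : ℂ)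
  let a : ℂ := ((2 * Real.sqrt 5 / 15 : ℝ) : ℂ)
  have h1 : Pop fvec q
      = (c*(q:ℂ)*(-a - Complex.I/3)) + (c*(-a - Complex.I/3))/2
        + (c*(q:ℂ)*Complex.I)/3 + (c*Complex.I)/4 + 0/5 := by
    rw [Pop, ← int_quartic (c*(q:ℂ)*(-a - Complex.I/3)) (c*(-a - Complex.I/3))
        (c*(q:ℂ)*Complex.I) (c*Complex.I) 0]
    apply intervalIntegral.integral_congr
    intro x _
    simp only [fvec, a, c]
    push_cast
    ring
  have h2 : Pop (fun q' => (q' : ℂ) * fvec q') q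
      = 0 + (c*(q:ℂ)*(-a - Complex.I/3))/2 + (c*(-a - Complex.I/3))/3
        + (c*(q:ℂ)*Complex.I)/4 + (c*Complex.I)/5 := by
    rw [Pop, ← int_quartic 0 (c*(q:ℂ)*(-a - Complex.I/3)) (c*(-a - Complex.I/3))
        (c*(q:ℂ)*Complex.I) (c*Complex.I)]
    apply intervalIntegral.integral_congr
    intro x _
    simp only [fvec, a, c]
    push_cast
    ring
  have hs : ((Real.sqrt 5 : ℝ) : ℂ)^2 = 5 := by
    norm_cast
    exact Real.sq_sqrt (by norm_num)
  rw [h1, h2, fvec]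
  simp only [a, c]
  push_cast
  linear_combination ((1/3 - (q:ℂ)^2)/5 * (9/10) + (-(q:ℂ)^2/50 + 1/150)) * hs + (1/3 - (q:ℂ)^2) * Complex.I_sq
end

section
/- Let H be a complex Hilbert space, A : H →L[ℂ] H a continuous linear map, and B : H →ₗ.[ℂ] H a linear partial map. Let D be a submodule of H with D ≤ B.domain such that A maps D into D and A (B φ) − B (A φ) = Complex.I • φ for all φ ∈ D. Then for every natural number k ≥ 1 and every φ ∈ D: A^k φ ∈ D (so A^k φ ∈ B.domain), and A^k (B φ) − B (A^k φ) = (Complex.I * k) • (A^(k−1) φ). -/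
theorem commutator_power_formula
    {H : Type*} [NormedAddCommGroup H] [InnerProductSpace ℂ H] [CompleteSpace H]
    (A : H →L[ℂ] H) (B : H →ₗ.[ℂ] H) (D : Submodule ℂ H) (hD : D ≤ B.domain)
    (hAD : ∀ φ ∈ D, A φ ∈ D)
    (hccr : ∀ φ (hφ : φ ∈ D),
      A (B ⟨φ, hD hφ⟩) - B ⟨A φ, hD (hAD φ hφ)⟩ = Complex.I • φ) :
    ∀ k : ℕ, 1 ≤ k → ∀ φ (hφ : φ ∈ D), ∃ hk : (A ^ k) φ ∈ D,
      (A ^ k) (B ⟨φ, hD hφ⟩) - B ⟨(A ^ k) φ, hD hk⟩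
        = (Complex.I * (k : ℂ)) • ((A ^ (k - 1)) φ) := by
  intro k hk
  induction k, hk using Nat.le_induction with
  | base =>
    intro φ hφ
    refine ⟨by simpa using hAD φ hφ, ?_⟩
    simpa using hccr φ hφ
  | succ n hn ih =>
    intro φ hφ
    obtain ⟨hmem, heq⟩ := ih φ hφ
    have hmem' : (A ^ (n + 1)) φ ∈ D := by
      have : (A ^ (n + 1)) φ = A ((A ^ n) φ) := by
        rw [pow_succ']; rfl
      rw [this]; exact hAD _ hmem
    refine ⟨hmem', ?_⟩
    have hAsucc : ∀ x : H, (A ^ (n + 1)) x = A ((A ^ n) x) := by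
      intro x; rw [pow_succ']; rfl
    have hccr' := hccr _ hmem
    have hBeq : B ⟨(A ^ (n + 1)) φ, hD hmem'⟩
        = B ⟨A ((A ^ n) φ), hD (hAD _ hmem)⟩ := by
      congr 1
      exact Subtype.ext (hAsucc φ)
    have hA1 : (A ^ (n + 1)) (B ⟨φ, hD hφ⟩)
        = A ((A ^ n) (B ⟨φ, hD hφ⟩)) := hAsucc _
    have heq' : (A ^ n) (B ⟨φ, hD hφ⟩)
        = B ⟨(A ^ n) φ, hD hmem⟩ + (Complex.I * (n : ℂ)) • ((A ^ (n - 1)) φ) := by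
      rw [← heq]; abel
    have hAn1 : A ((A ^ (n - 1)) φ) = (A ^ n) φ := by
      have : A * A ^ (n - 1) = A ^ n := by
        rw [← pow_succ']
        congr 1
        omega
      calc A ((A ^ (n - 1)) φ) = (A * A ^ (n - 1)) φ := rfl
        _ = (A ^ n) φ := by rw [this]
    rw [hA1, heq', hBeq, map_add, map_smul, hAn1]
    rw [sub_eq_iff_eq_add] at hccr'
    rw [hccr']
    push_cast
    module
end

section
/- Let H be a complex Hilbert space, Q : H →L[ℂ] H self-adjoint (IsSelfAdjoint Q), and P : H →ₗ.[ℂ] H a densely defined unbounded operator. Let D_c be a submodule of H contained in P.domain such that: (1) Q maps D_c into D_c; (2) Q (P φ) − P (Q φ) = Complex.I • φ for all φ ∈ D_c; (3) the graph {(φ, P φ) : φ ∈ D_c} is closed in H × H. Then for every β : ℝ and every φ ∈ D_c, the vector U_β φ belongs to D_c (in particular U_β φ ∈ P.domain), and U_β (P φ) − P (U_β φ) = (β : ℂ) • U_β φ, where U_β = exp (−(Complex.I * β) • Q). -/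
open NormedSpace

section Aux

variable {E : Type*} [NormedAddCommGroup E] [NormedSpace ℂ E]

omit [NormedSpace ℂ E] in
lemma exp_apply_hasSum' [NormedSpace ℂ E] [CompleteSpace E] (A : E →L[ℂ] E) (x : E) :
    HasSum (fun n : ℕ => ((n.factorial : ℂ))⁻¹ • (A ^ n) x) (exp A x) := by
  have h := NormedSpace.exp_series_hasSum_exp' (𝕂 := ℂ) A
  have h2 := (ContinuousLinearMap.apply ℂ E x).hasSum h
  simpa using h2

lemma exp_mem_of_invariant [CompleteSpace E] (S : Submodule ℂ E) (hS : IsClosed (S : Set E))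
    (A : E →L[ℂ] E) (hA : ∀ x ∈ S, A x ∈ S) {x : E} (hx : x ∈ S) :
    exp A x ∈ S := by
  have hpow : ∀ n : ℕ, (A ^ n) x ∈ S := by
    intro n
    induction n with
    | zero => simpa using hx
    | succ n ih =>
        have : (A ^ (n + 1)) x = A ((A ^ n) x) := by
          rw [pow_succ']; rfl
        rw [this]; exact hA _ ih
  have h := exp_apply_hasSum' A x
  refine hS.mem_of_tendsto h.tendsto_sum_nat (Filter.Eventually.of_forall fun n => ?_)
  exact S.sum_mem fun i _ => S.smul_mem _ (hpow i)

lemma prodMap_pow_apply (A : E →L[ℂ] E) (n : ℕ) (x y : E) :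
    ((A.prodMap A) ^ n) (x, y) = ((A ^ n) x, (A ^ n) y) := by
  induction n with
  | zero => rfl
  | succ n ih =>
      have h1 : ((A.prodMap A) ^ (n+1)) (x, y) = A.prodMap A (((A.prodMap A) ^ n) (x, y)) := by
        rw [pow_succ']; rfl
      have h2 : (A ^ (n+1)) x = A ((A ^ n) x) := by rw [pow_succ']; rfl
      have h3 : (A ^ (n+1)) y = A ((A ^ n) y) := by rw [pow_succ']; rfl
      rw [h1, ih, h2, h3]; rfl

lemma exp_prodMap_apply [CompleteSpace E] (A : E →L[ℂ] E) (x y : E) :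
    exp (A.prodMap A) (x, y) = (exp A x, exp A y) := by
  have hx := exp_apply_hasSum' A x
  have hy := exp_apply_hasSum' A y
  have hpair := hx.prodMk hy
  have h2 := exp_apply_hasSum' (A.prodMap A) (x, y)
  have heq : (fun n : ℕ => ((n.factorial : ℂ))⁻¹ • (((A.prodMap A) ^ n) (x, y)))
      = fun n : ℕ => (((n.factorial : ℂ))⁻¹ • (A ^ n) x, ((n.factorial : ℂ))⁻¹ • (A ^ n) y) := by
    funext n
    rw [prodMap_pow_apply]
    rfl
  rw [heq] at h2
  exact h2.unique hpair

lemma exp_nilpotent_eq [CompleteSpace E] (N : E →L[ℂ] E) (hN : N * N = 0) :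
    exp N = 1 + N := by
  have hzero : ∀ n ∉ Finset.range 2, ((n.factorial : ℂ))⁻¹ • N ^ n = 0 := by
    intro n hn
    simp only [Finset.mem_range, not_lt] at hn
    obtain ⟨k, rfl⟩ := Nat.exists_eq_add_of_le hn
    rw [pow_add, pow_two, hN, zero_mul, smul_zero]
  rw [exp_eq_tsum ℂ]
  dsimp only
  rw [tsum_eq_sum hzero]
  simp [Finset.sum_range_succ]

/-- The graph of `P` restricted to `Dc`, as a submodule of `E × E`. -/
def graphSub (P : E →ₗ.[ℂ] E) (Dc : Submodule ℂ E) (hDc : Dc ≤ P.domain) :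
    Submodule ℂ (E × E) where
  carrier := {p : E × E | ∃ hp : p.1 ∈ Dc, P ⟨p.1, hDc hp⟩ = p.2}
  add_mem' := by
    rintro ⟨a, b⟩ ⟨x, y⟩ ⟨ha, hPa⟩ ⟨hx, hPx⟩
    refine ⟨Dc.add_mem ha hx, ?_⟩
    show (P (⟨a, hDc ha⟩ + ⟨x, hDc hx⟩) : E) = b + y
    rw [P.map_add]
    exact congrArg₂ (· + ·) hPa hPx
  zero_mem' := by
    refine ⟨Dc.zero_mem, ?_⟩
    show (P (0 : P.domain) : E) = 0
    exact P.map_zero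
  smul_mem' := by
    rintro t ⟨x, y⟩ ⟨hx, hPx⟩
    refine ⟨Dc.smul_mem t hx, ?_⟩
    show (P (t • ⟨x, hDc hx⟩) : E) = t • y
    rw [P.map_smul]
    exact congrArg (t • ·) hPx

lemma mem_graphSub {P : E →ₗ.[ℂ] E} {Dc : Submodule ℂ E} {hDc : Dc ≤ P.domain} {p : E × E} :
    p ∈ graphSub P Dc hDc ↔ ∃ hp : p.1 ∈ Dc, P ⟨p.1, hDc hp⟩ = p.2 := Iff.rfl

theorem main_aux
    {H : Type*} [NormedAddCommGroup H] [NormedSpace ℂ H] [CompleteSpace H]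
    (Q : H →L[ℂ] H)
    (P : H →ₗ.[ℂ] H)
    (Dc : Submodule ℂ H) (hDc : Dc ≤ P.domain)
    (hQDc : ∀ φ ∈ Dc, Q φ ∈ Dc)
    (hccr : ∀ φ (hφ : φ ∈ Dc),
      Q (P ⟨φ, hDc hφ⟩) - P ⟨Q φ, hDc (hQDc φ hφ)⟩ = Complex.I • φ)
    (hclosed : IsClosed {p : H × H | ∃ hp : p.1 ∈ Dc, P ⟨p.1, hDc hp⟩ = p.2}) :
    ∀ β : ℝ, ∀ φ (hφ : φ ∈ Dc),
      ∃ h : exp ((-(Complex.I * (β : ℂ))) • Q) φ ∈ Dc,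
      exp ((-(Complex.I * (β : ℂ))) • Q) (P ⟨φ, hDc hφ⟩) - P ⟨_, hDc h⟩
        = ((β : ℂ)) • (exp ((-(Complex.I * (β : ℂ))) • Q) φ) := by
  intro β φ hφ
  set c : ℂ := -(Complex.I * (β : ℂ)) with hc
  set S : Submodule ℂ (H × H) := graphSub P Dc hDc with hSdef
  have hSclosed : IsClosed (S : Set (H × H)) := hclosed
  set N : (H × H) →L[ℂ] (H × H) :=
    (-Complex.I) • ((ContinuousLinearMap.inr ℂ H H).comp
      (ContinuousLinearMap.fst ℂ H H)) with hNdef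
  have hNapp : ∀ p : H × H, N p = (0, -Complex.I • p.1) := by
    intro p; simp [hNdef]
  set B : (H × H) →L[ℂ] (H × H) := Q.prodMap Q + N with hB
  have hBapp : ∀ p : H × H, B p = (Q p.1, Q p.2 - Complex.I • p.1) := by
    intro p
    have h0 : B p = (Q p.1, Q p.2) + (0, -Complex.I • p.1) := by
      rw [hB, ContinuousLinearMap.add_apply, hNapp]; rfl
    rw [h0, Prod.mk_add_mk]
    simp [Prod.ext_iff, sub_eq_add_neg]
  -- c • B preserves S
  have hBS : ∀ p ∈ S, (c • B) p ∈ S := by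
    rintro ⟨x, y⟩ hp
    obtain ⟨hx, hPx⟩ := mem_graphSub.mp hp
    have hBp : (c • B) (x, y) = c • (Q x, Q y - Complex.I • x) := by
      rw [ContinuousLinearMap.smul_apply, hBapp]
    rw [hBp]
    refine S.smul_mem c (mem_graphSub.mpr ⟨hQDc x hx, ?_⟩)
    have h := hccr x hx
    have hPe : P ⟨Q x, hDc (hQDc x hx)⟩ = Q (P ⟨x, hDc hx⟩) - Complex.I • x := by
      rw [← h]; exact (sub_sub_cancel _ _).symm
    show P ⟨Q x, _⟩ = Q y - Complex.I • x
    rw [hPe]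
    have : P ⟨x, hDc hx⟩ = y := hPx
    rw [this]
  have hmem : ((φ, P ⟨φ, hDc hφ⟩) : H × H) ∈ S := mem_graphSub.mpr ⟨hφ, rfl⟩
  have hexp_mem : exp (c • B) (φ, P ⟨φ, hDc hφ⟩) ∈ S :=
    exp_mem_of_invariant S hSclosed (c • B) hBS hmem
  -- compute exp (c • B)
  have hcomm : Commute (c • Q.prodMap Q) (c • N) := by
    apply Commute.smul_left
    apply Commute.smul_right
    apply ContinuousLinearMap.ext
    rintro ⟨x, y⟩
    show (Q.prodMap Q) (N (x, y)) = N ((Q.prodMap Q) (x, y))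
    rw [hNapp, hNapp]
    simp
  have hsplit : exp (c • B) = exp (c • Q.prodMap Q) * exp (c • N) := by
    rw [hB, smul_add]
    let +nondep : NormedAlgebra ℚ ((H × H) →L[ℂ] (H × H)) := .restrictScalars ℚ ℂ _
    exact exp_add_of_commute hcomm
  have hNnil : (c • N) * (c • N) = 0 := by
    apply ContinuousLinearMap.ext
    rintro ⟨x, y⟩
    show (c • N) ((c • N) (x, y)) = 0
    simp [hNapp]
  have hexpN : exp (c • N) = 1 + c • N := exp_nilpotent_eq _ hNnil
  have hcQ : c • Q.prodMap Q = (c • Q).prodMap (c • Q) := by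
    apply ContinuousLinearMap.ext
    rintro ⟨x, y⟩
    rfl
  have hval : exp (c • B) (φ, P ⟨φ, hDc hφ⟩)
      = (exp (c • Q) φ,
         exp (c • Q) (P ⟨φ, hDc hφ⟩) - (β : ℂ) • exp (c • Q) φ) := by
    rw [hsplit, ContinuousLinearMap.mul_apply, hexpN]
    have h1 : ((1 + c • N) : (H × H) →L[ℂ] (H × H)) (φ, P ⟨φ, hDc hφ⟩)
        = (φ, P ⟨φ, hDc hφ⟩ - (β : ℂ) • φ) := by
      have hscal : c * (-Complex.I) = -((β : ℂ)) := by
        rw [hc]; linear_combination (β : ℂ) * Complex.I_sq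
      rw [ContinuousLinearMap.add_apply, ContinuousLinearMap.one_apply,
        ContinuousLinearMap.smul_apply, hNapp]
      show (φ + c • (0 : H), (P ⟨φ, hDc hφ⟩ : H) + c • (-Complex.I • φ)) = _
      refine Prod.ext (by simp) ?_
      dsimp only
      rw [smul_smul, hscal, neg_smul, sub_eq_add_neg]
    rw [h1, hcQ, exp_prodMap_apply, map_sub, map_smul]
  rw [hval] at hexp_mem
  obtain ⟨hmem1, hmem2⟩ := mem_graphSub.mp hexp_mem
  refine ⟨hmem1, ?_⟩
  have h2 : P ⟨exp (c • Q) φ, hDc hmem1⟩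
      = exp (c • Q) (P ⟨φ, hDc hφ⟩) - (β : ℂ) • exp (c • Q) φ := hmem2
  rw [h2]
  abel

end Aux

/-- The unitary group element `U_β = exp(-(i β) Q)`. -/
noncomputable def Uop {H : Type*} [NormedAddCommGroup H] [InnerProductSpace ℂ H]
    [CompleteSpace H] (Q : H →L[ℂ] H) (β : ℝ) : H →L[ℂ] H :=
  NormedSpace.exp ((-(Complex.I * (β : ℂ))) • Q)

theorem unitary_commutation_on_canonical_domain
    {H : Type*} [NormedAddCommGroup H] [InnerProductSpace ℂ H] [CompleteSpace H]
    (Q : H →L[ℂ] H) (hQ : IsSelfAdjoint Q)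
    (P : H →ₗ.[ℂ] H) (hPdense : Dense (P.domain : Set H))
    (Dc : Submodule ℂ H) (hDc : Dc ≤ P.domain)
    (hQDc : ∀ φ ∈ Dc, Q φ ∈ Dc)
    (hccr : ∀ φ (hφ : φ ∈ Dc),
      Q (P ⟨φ, hDc hφ⟩) - P ⟨Q φ, hDc (hQDc φ hφ)⟩ = Complex.I • φ)
    (hclosed : IsClosed {p : H × H | ∃ hp : p.1 ∈ Dc, P ⟨p.1, hDc hp⟩ = p.2}) :
    ∀ β : ℝ, ∀ φ (hφ : φ ∈ Dc), ∃ h : Uop Q β φ ∈ Dc,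
      Uop Q β (P ⟨φ, hDc hφ⟩) - P ⟨Uop Q β φ, hDc h⟩
        = ((β : ℂ)) • (Uop Q β φ) := by
  exact main_aux Q P Dc hDc hQDc hccr hclosed
end

section
/- Let H be a complex Hilbert space, Q : H →L[ℂ] H self-adjoint (IsSelfAdjoint Q), and P : H →ₗ.[ℂ] H a symmetric, densely defined unbounded operator. Let D_c be a submodule of H contained in P.domain such that: (1) Q maps D_c into D_c; (2) Q (P φ) − P (Q φ) = Complex.I • φ for all φ ∈ D_c; (3) the graph {(φ, P φ) : φ ∈ D_c} is closed in H × H; (4) D_c is dense in H. Suppose β' : ℝ is such that for every φ ∈ P.domain with φ ∉ D_c, U_{β'} φ ∈ P.domain and U_{β'} φ ∉ D_c. Then for every φ ∈ P.domain with φ ∉ D_c, U_{β'} (P φ) − P (U_{β'} φ) = (β' : ℂ) • U_{β'} φ, where U_{β'} = exp (−(Complex.I * β') • Q). -/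
open scoped ComplexInnerProductSpace

set_option maxHeartbeats 1000000
set_option synthInstance.maxHeartbeats 1000000

section Aux

variable {E : Type*} [NormedAddCommGroup E] [NormedSpace ℂ E] [CompleteSpace E]

lemma aux_exp_of_sq (a : E →L[ℂ] E) (h : a * a = 0) :
    NormedSpace.exp a = 1 + a := by
  rw [NormedSpace.exp_eq_tsum ℂ]
  show ∑' n : ℕ, ((n.factorial : ℂ)⁻¹) • a ^ n = 1 + a
  have hz : ∀ n ∉ Finset.range 2, ((n.factorial : ℂ)⁻¹) • a ^ n = 0 := by
    intro n hn
    rw [Finset.mem_range, not_lt] at hn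
    have hpow : a ^ n = a ^ 2 * a ^ (n - 2) := by rw [← pow_add]; congr 1; omega
    rw [hpow, pow_two, h, zero_mul, smul_zero]
  rw [tsum_eq_sum hz]
  simp [Finset.sum_range_succ]

/-- The diagonal algebra homomorphism `A ↦ A × A`. -/
noncomputable def diagAH (E : Type*) [NormedAddCommGroup E] [NormedSpace ℂ E] :
    (E →L[ℂ] E) →ₐ[ℂ] ((E × E) →L[ℂ] (E × E)) where
  toFun A := A.prodMap A
  map_one' := by ext x <;> rfl
  map_mul' A B := by ext x <;> rfl
  map_zero' := by ext x <;> rfl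
  map_add' A B := by ext x <;> rfl
  commutes' r := by ext x <;> rfl

lemma diagAH_cont (E : Type*) [NormedAddCommGroup E] [NormedSpace ℂ E] :
    Continuous (diagAH E) := by
  have h : ⇑(diagAH E) = fun A : E →L[ℂ] E =>
      ContinuousLinearMap.prodMapL ℂ E E E E (A, A) := by
    funext A; rw [ContinuousLinearMap.prodMapL_apply]; rfl
  rw [h]
  exact (ContinuousLinearMap.prodMapL ℂ E E E E).continuous.comp
    (continuous_id.prodMk continuous_id)

/-- The nilpotent part `(x, y) ↦ (0, -i x)`. -/
noncomputable def Nmap (E : Type*) [NormedAddCommGroup E] [NormedSpace ℂ E] :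
    (E × E) →L[ℂ] (E × E) :=
  (ContinuousLinearMap.inr ℂ E E).comp ((-Complex.I : ℂ) • ContinuousLinearMap.fst ℂ E E)

lemma Nmap_apply (x : E × E) : Nmap E x = (0, (-Complex.I : ℂ) • x.1) := rfl

/-- The block operator `(x, y) ↦ (Q x, Q y - i x)`. -/
noncomputable def Bop (Q : E →L[ℂ] E) : (E × E) →L[ℂ] (E × E) := Q.prodMap Q + Nmap E

lemma Bop_apply (Q : E →L[ℂ] E) (p : E × E) :
    Bop Q p = (Q p.1, Q p.2 - Complex.I • p.1) := by
  simp [Bop, Nmap_apply, ContinuousLinearMap.add_apply, Prod.ext_iff,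
    sub_eq_add_neg, neg_smul]

lemma exp_Bop_apply (Q : E →L[ℂ] E) (t : ℝ) (x y : E) :
    NormedSpace.exp ((-(Complex.I * (t : ℂ))) • Bop Q) (x, y)
      = (NormedSpace.exp ((-(Complex.I * (t : ℂ))) • Q) x,
         NormedSpace.exp ((-(Complex.I * (t : ℂ))) • Q) y
           - (t : ℂ) • NormedSpace.exp ((-(Complex.I * (t : ℂ))) • Q) x) := by
  letI : NormedAlgebra ℚ (E →L[ℂ] E) := NormedAlgebra.restrictScalars ℚ ℂ _
  letI : NormedAlgebra ℚ ((E × E) →L[ℂ] (E × E)) := NormedAlgebra.restrictScalars ℚ ℂ _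
  set c : ℂ := -(Complex.I * (t : ℂ)) with hc
  have hNQ : Commute (Q.prodMap Q) (Nmap E) := by
    ext z <;> simp [Nmap_apply, ContinuousLinearMap.mul_apply, Nmap, map_smul]
  have hcomm : Commute (c • Q.prodMap Q) (c • Nmap E) := (hNQ.smul_left c).smul_right c
  have hsq : (c • Nmap E) * (c • Nmap E) = 0 := by
    ext z <;> simp [ContinuousLinearMap.mul_apply, Nmap_apply]
  have hN : NormedSpace.exp (c • Nmap E) = 1 + c • Nmap E := aux_exp_of_sq _ hsq
  have hdiag : c • Q.prodMap Q = diagAH E (c • Q) := by ext z <;> rfl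
  have hPM : NormedSpace.exp (c • Q.prodMap Q)
      = (NormedSpace.exp (c • Q)).prodMap (NormedSpace.exp (c • Q)) := by
    rw [hdiag, ← NormedSpace.map_exp (diagAH E) (diagAH_cont E)]
    rfl
  have hBs : c • Bop Q = c • Q.prodMap Q + c • Nmap E := by rw [Bop, smul_add]
  rw [hBs, NormedSpace.exp_add_of_commute hcomm, hPM, hN]
  have hct : c * (-Complex.I) = (-(t : ℂ)) := by
    rw [hc]; ring_nf; rw [Complex.I_sq]; ring
  have hct2 : c * Complex.I = (t : ℂ) := by
    rw [hc]; ring_nf; rw [Complex.I_sq]; ring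
  have h1 : ((1 : (E × E) →L[ℂ] (E × E)) + c • Nmap E) (x, y)
      = (x, y + (-(t : ℂ)) • x) := by
    simp [Nmap_apply, Prod.ext_iff, smul_smul, hct, hct2]
  rw [ContinuousLinearMap.mul_apply, h1]
  have hct2 : c * Complex.I = (t : ℂ) := by
    rw [hc]; ring_nf; rw [Complex.I_sq]; ring
  simp [Prod.ext_iff, map_add, map_smul, sub_eq_add_neg, neg_smul, smul_smul, hct2]

/-- Invariance of a closed "graph-like" set under the exponential flow, together with
the explicit formula for the flow. -/
lemma weyl_graph (Q : E →L[ℂ] E) (S : Set (E × E))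
    (hSclosed : IsClosed S) (h0 : (0 : E × E) ∈ S)
    (hadd : ∀ p q : E × E, p ∈ S → q ∈ S → p + q ∈ S)
    (hsmul : ∀ (a : ℂ) (p : E × E), p ∈ S → a • p ∈ S)
    (hB : ∀ p ∈ S, (Q p.1, Q p.2 - Complex.I • p.1) ∈ S)
    (t : ℝ) (x y : E) (hxy : (x, y) ∈ S) :
    (NormedSpace.exp ((-(Complex.I * (t : ℂ))) • Q) x,
     NormedSpace.exp ((-(Complex.I * (t : ℂ))) • Q) y
       - (t : ℂ) • NormedSpace.exp ((-(Complex.I * (t : ℂ))) • Q) x) ∈ S := by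
  set c : ℂ := -(Complex.I * (t : ℂ)) with hc
  set a : (E × E) →L[ℂ] (E × E) := c • Bop Q with ha
  have hSB : ∀ p ∈ S, Bop Q p ∈ S := by
    intro p hp
    rw [Bop_apply]
    exact hB p hp
  have hpow : ∀ n : ℕ, ∀ p ∈ S, (a ^ n) p ∈ S := by
    intro n
    induction n with
    | zero => intro p hp; simpa using hp
    | succ n ih =>
      intro p hp
      rw [pow_succ, ContinuousLinearMap.mul_apply]
      exact ih _ (by simpa [ha] using hsmul c _ (hSB p hp))
  have hhs : HasSum (fun n : ℕ => ((n.factorial : ℂ))⁻¹ • a ^ n)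
      (NormedSpace.exp a) := NormedSpace.exp_series_hasSum_exp' a
  have happ : HasSum (fun n : ℕ => ((n.factorial : ℂ))⁻¹ • ((a ^ n) (x, y)))
      (NormedSpace.exp a (x, y)) := by
    have := hhs.mapL (ContinuousLinearMap.apply ℂ (E × E) (x, y))
    simpa using this
  have hmem : NormedSpace.exp a (x, y) ∈ S := by
    refine hSclosed.mem_of_tendsto happ.tendsto_sum_nat (.of_forall fun n => ?_)
    refine Finset.sum_induction _ (· ∈ S) (fun u v hu hv => hadd u v hu hv) h0 ?_
    exact fun i _ => hsmul _ _ (hpow i _ hxy)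
  rw [ha] at hmem
  rw [hc] at hmem ⊢
  rwa [exp_Bop_apply] at hmem

end Aux

theorem unitary_commutation_outside_canonical_domain
    {H : Type*} [NormedAddCommGroup H] [InnerProductSpace ℂ H] [CompleteSpace H]
    (Q : H →L[ℂ] H) (hQ : IsSelfAdjoint Q)
    (P : H →ₗ.[ℂ] H)
    (hPsymm : ∀ x y : P.domain, ⟪P x, (y : H)⟫ = ⟪(x : H), P y⟫)
    (hPdense : Dense (P.domain : Set H))
    (Dc : Submodule ℂ H) (hDc : Dc ≤ P.domain)
    (hQDc : ∀ φ ∈ Dc, Q φ ∈ Dc)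
    (hccr : ∀ φ (hφ : φ ∈ Dc),
      Q (P ⟨φ, hDc hφ⟩) - P ⟨Q φ, hDc (hQDc φ hφ)⟩ = Complex.I • φ)
    (hclosed : IsClosed {p : H × H | ∃ hp : p.1 ∈ Dc, P ⟨p.1, hDc hp⟩ = p.2})
    (hDcdense : Dense (Dc : Set H))
    (β' : ℝ)
    (hinv : ∀ φ : H, (hφ : φ ∈ P.domain) → φ ∉ Dc →
      Uop Q β' φ ∈ P.domain ∧ Uop Q β' φ ∉ Dc) :
    ∀ φ : H, ∀ hφ : φ ∈ P.domain, ∀ hn : φ ∉ Dc,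
      Uop Q β' (P ⟨φ, hφ⟩) - P ⟨Uop Q β' φ, (hinv φ hφ hn).1⟩
        = ((β' : ℂ)) • (Uop Q β' φ) := by
  -- the graph set
  set S : Set (H × H) := {p : H × H | ∃ hp : p.1 ∈ Dc, P ⟨p.1, hDc hp⟩ = p.2} with hS
  -- Key: the Weyl relation on Dc, for every t.
  have key : ∀ (t : ℝ) (η : H) (hη : η ∈ Dc), ∃ h1 : Uop Q t η ∈ Dc,
      P ⟨Uop Q t η, hDc h1⟩ = Uop Q t (P ⟨η, hDc hη⟩) - (t : ℂ) • Uop Q t η := by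
    intro t η hη
    have h0 : (0 : H × H) ∈ S := by
      refine ⟨Dc.zero_mem, ?_⟩
      show P (0 : P.domain) = (0 : H)
      exact P.map_zero
    have hadd : ∀ p q : H × H, p ∈ S → q ∈ S → p + q ∈ S := by
      rintro p q ⟨hp1, hp2⟩ ⟨hq1, hq2⟩
      refine ⟨Dc.add_mem hp1 hq1, ?_⟩
      show P ((⟨p.1, hDc hp1⟩ : P.domain) + (⟨q.1, hDc hq1⟩ : P.domain)) = p.2 + q.2
      rw [P.map_add, hp2, hq2]
    have hsmul : ∀ (a : ℂ) (p : H × H), p ∈ S → a • p ∈ S := by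
      rintro a p ⟨hp1, hp2⟩
      refine ⟨Dc.smul_mem a hp1, ?_⟩
      show P (a • (⟨p.1, hDc hp1⟩ : P.domain)) = a • p.2
      rw [P.map_smul, hp2]
    have hB : ∀ p ∈ S, (Q p.1, Q p.2 - Complex.I • p.1) ∈ S := by
      rintro p ⟨hp1, hp2⟩
      refine ⟨hQDc p.1 hp1, ?_⟩
      have h := hccr p.1 hp1
      rw [hp2] at h
      show P ⟨Q p.1, hDc (hQDc p.1 hp1)⟩ = Q p.2 - Complex.I • p.1
      rw [← h, sub_sub_cancel]
    have hres := weyl_graph Q S hclosed h0 hadd hsmul hB t η (P ⟨η, hDc hη⟩) ⟨hη, rfl⟩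
    obtain ⟨h1, h2⟩ := hres
    exact ⟨h1, h2⟩
  -- adjoint of Uop
  have hadj : ContinuousLinearMap.adjoint (Uop Q β') = Uop Q (-β') := by
    rw [← ContinuousLinearMap.star_eq_adjoint]
    rw [Uop, NormedSpace.star_exp, Uop]
    congr 1
    rw [star_smul, hQ.star_eq]
    congr 1
    simp [Complex.ext_iff]
  have hadjU : ∀ (x y : H), ⟪y, Uop Q β' x⟫ = ⟪Uop Q (-β') y, x⟫ := by
    intro x y
    rw [← hadj, ContinuousLinearMap.adjoint_inner_left]
  intro φ hφ hn
  apply hDcdense.eq_of_inner_right (𝕜 := ℂ)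
  intro η hη
  lift η to Dc using hη
  obtain ⟨h1, h2⟩ := key (-β') η η.2
  have e1 : ⟪(η : H), Uop Q β' (P ⟨φ, hφ⟩)⟫
      = ⟪Uop Q (-β') (P ⟨(η : H), hDc η.2⟩), (φ : H)⟫
        + (β' : ℂ) * ⟪Uop Q (-β') (η : H), (φ : H)⟫ := by
    calc ⟪(η : H), Uop Q β' (P ⟨φ, hφ⟩)⟫
        = ⟪Uop Q (-β') (η : H), (P ⟨φ, hφ⟩ : H)⟫ := hadjU _ _
      _ = ⟪(P ⟨Uop Q (-β') (η : H), hDc h1⟩ : H), (φ : H)⟫ :=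
          (hPsymm ⟨Uop Q (-β') (η : H), hDc h1⟩ ⟨φ, hφ⟩).symm
      _ = ⟪Uop Q (-β') (P ⟨(η : H), hDc η.2⟩) - ((-β' : ℝ) : ℂ) • Uop Q (-β') (η : H),
            (φ : H)⟫ := by rw [h2]
      _ = ⟪Uop Q (-β') (P ⟨(η : H), hDc η.2⟩), (φ : H)⟫
            + (β' : ℂ) * ⟪Uop Q (-β') (η : H), (φ : H)⟫ := by
          rw [sub_eq_add_neg, inner_add_left, inner_neg_left, inner_smul_left]
          simp [Complex.conj_ofReal]
  have e3 : ⟪(η : H), (P ⟨Uop Q β' φ, (hinv φ hφ hn).1⟩ : H)⟫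
      = ⟪Uop Q (-β') (P ⟨(η : H), hDc η.2⟩), (φ : H)⟫ := by
    calc ⟪(η : H), (P ⟨Uop Q β' φ, (hinv φ hφ hn).1⟩ : H)⟫
        = ⟪(P ⟨(η : H), hDc η.2⟩ : H), Uop Q β' φ⟫ :=
          (hPsymm ⟨(η : H), hDc η.2⟩ ⟨Uop Q β' φ, (hinv φ hφ hn).1⟩).symm
      _ = ⟪Uop Q (-β') (P ⟨(η : H), hDc η.2⟩), (φ : H)⟫ := hadjU _ _
  have e4 : ⟪(η : H), Uop Q β' φ⟫ = ⟪Uop Q (-β') (η : H), (φ : H)⟫ := hadjU _ _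
  rw [inner_sub_right, inner_smul_right, e1, e3, e4]
  ring
end

section
/- Let H be a complex Hilbert space, Q : H →L[ℂ] H self-adjoint (IsSelfAdjoint Q), and P : H →ₗ.[ℂ] H a symmetric, densely defined unbounded operator. Let D_c be a submodule of H contained in P.domain such that: (1) Q maps D_c into D_c; (2) Q (P φ) − P (Q φ) = Complex.I • φ for all φ ∈ D_c; (3) the graph {(φ, P φ) : φ ∈ D_c} is closed in H × H; (4) D_c is dense in H. Suppose β₀ : ℝ, β₀ ≠ 0, both β₀ and −β₀ are invariance parameters, and P has at least one eigenvalue (there exist φ₀ ∈ P.domain, φ₀ ≠ 0, and p₀ : ℝ with P φ₀ = (p₀ : ℂ) • φ₀). Then the set of real eigenvalues of P, {p : ℝ | ∃ φ ∈ P.domain, φ ≠ 0 ∧ P φ = (p : ℂ) • φ}, is neither bounded above nor bounded below. -/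
open scoped ComplexInnerProductSpace

/-- `β` is an invariance parameter: `U_β` maps `P.domain \ D_c` into itself. -/
def IsInvParam {H : Type*} [NormedAddCommGroup H] [InnerProductSpace ℂ H]
    [CompleteSpace H] (Q : H →L[ℂ] H) (P : H →ₗ.[ℂ] H) (Dc : Submodule ℂ H)
    (β : ℝ) : Prop :=
  ∀ φ : H, φ ∈ P.domain → φ ∉ Dc → Uop Q β φ ∈ P.domain ∧ Uop Q β φ ∉ Dc

section aux

variable {H : Type*} [NormedAddCommGroup H] [InnerProductSpace ℂ H] [CompleteSpace H]

lemma Uop_hasSum (Q : H →L[ℂ] H) (β : ℝ) (φ : H) :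
    HasSum (fun n : ℕ => (((Nat.factorial n : ℂ))⁻¹ * (-(Complex.I * (β:ℂ)))^n) • (Q^n) φ)
      (Uop Q β φ) := by
  have h := NormedSpace.exp_series_hasSum_exp' (𝕂 := ℂ) ((-(Complex.I * (β:ℂ))) • Q)
  have h2 := (ContinuousLinearMap.apply ℂ H φ).hasSum h
  rw [Uop]
  convert h2 using 2 with n
  simp only [ContinuousLinearMap.apply_apply, smul_pow, ContinuousLinearMap.smul_apply, smul_smul]
  rfl

lemma Uop_mul (Q : H →L[ℂ] H) (β β' : ℝ) :
    Uop Q β * Uop Q β' = Uop Q (β + β') := by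
  letI : NormedAlgebra ℚ (H →L[ℂ] H) := NormedAlgebra.restrictScalars ℚ ℂ (H →L[ℂ] H)
  rw [Uop, Uop, Uop, ← NormedSpace.exp_add_of_commute]
  · congr 1
    push_cast
    rw [← add_smul]
    ring_nf
  · rw [Commute, SemiconjBy, smul_mul_smul_comm, smul_mul_smul_comm, mul_comm]

lemma Uop_zero (Q : H →L[ℂ] H) : Uop Q 0 = 1 := by
  simp [Uop, NormedSpace.exp_zero]

lemma Uop_neg_apply (Q : H →L[ℂ] H) (β : ℝ) (φ : H) :
    Uop Q (-β) (Uop Q β φ) = φ := by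
  have := Uop_mul Q (-β) β
  rw [neg_add_cancel, Uop_zero] at this
  have := congrArg (fun T : H →L[ℂ] H => T φ) this
  simpa using this

lemma Uop_ne_zero (Q : H →L[ℂ] H) (β : ℝ) {φ : H} (h : φ ≠ 0) : Uop Q β φ ≠ 0 := by
  intro h0
  apply h
  rw [← Uop_neg_apply Q β φ, h0, map_zero]

lemma Uop_adjoint (Q : H →L[ℂ] H) (hQ : IsSelfAdjoint Q) (β : ℝ) :
    ContinuousLinearMap.adjoint (Uop Q β) = Uop Q (-β) := by
  have : ContinuousLinearMap.adjoint (Uop Q β) = star (Uop Q β) := rfl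
  rw [this, Uop, NormedSpace.star_exp, Uop]
  congr 1
  rw [star_smul, hQ.star_eq]
  congr 1
  push_cast
  simp [Complex.ext_iff]

end aux

theorem point_spectrum_unbounded_of_invariance_parameter
    {H : Type*} [NormedAddCommGroup H] [InnerProductSpace ℂ H] [CompleteSpace H]
    (Q : H →L[ℂ] H) (hQ : IsSelfAdjoint Q)
    (P : H →ₗ.[ℂ] H)
    (hPsymm : ∀ x y : P.domain, ⟪P x, (y : H)⟫ = ⟪(x : H), P y⟫)
    (hPdense : Dense (P.domain : Set H))
    (Dc : Submodule ℂ H) (hDc : Dc ≤ P.domain)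
    (hQDc : ∀ φ ∈ Dc, Q φ ∈ Dc)
    (hccr : ∀ φ (hφ : φ ∈ Dc),
      Q (P ⟨φ, hDc hφ⟩) - P ⟨Q φ, hDc (hQDc φ hφ)⟩ = Complex.I • φ)
    (hclosed : IsClosed {p : H × H | ∃ hp : p.1 ∈ Dc, P ⟨p.1, hDc hp⟩ = p.2})
    (hDcdense : Dense (Dc : Set H))
    (β₀ : ℝ) (hβ₀ne : β₀ ≠ 0)
    (hβ₀ : IsInvParam Q P Dc β₀) (hβ₀' : IsInvParam Q P Dc (-β₀))
    (hpoint : ∃ (φ₀ : H) (hφ₀ : φ₀ ∈ P.domain) (p₀ : ℝ),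
      φ₀ ≠ 0 ∧ P ⟨φ₀, hφ₀⟩ = ((p₀ : ℂ)) • φ₀) :
    ¬ BddAbove {p : ℝ | ∃ (φ : H) (hφ : φ ∈ P.domain),
        φ ≠ 0 ∧ P ⟨φ, hφ⟩ = ((p : ℂ)) • φ} ∧
      ¬ BddBelow {p : ℝ | ∃ (φ : H) (hφ : φ ∈ P.domain),
        φ ≠ 0 ∧ P ⟨φ, hφ⟩ = ((p : ℂ)) • φ} := by
  classical
  set S : Set ℝ := {p : ℝ | ∃ (φ : H) (hφ : φ ∈ P.domain),
      φ ≠ 0 ∧ P ⟨φ, hφ⟩ = ((p : ℂ)) • φ} with hS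
  -- the restriction of `P` to `Dc` as an everywhere-defined linear map on `Dc`
  let P' : Dc →ₗ[ℂ] H :=
    { toFun := fun x => P ⟨(x : H), hDc x.2⟩
      map_add' := fun x y => by
        have h : (⟨((x + y : Dc) : H), hDc (x + y).2⟩ : P.domain)
            = ⟨(x : H), hDc x.2⟩ + ⟨(y : H), hDc y.2⟩ := by ext; rfl
        show P ⟨((x + y : Dc) : H), hDc (x + y).2⟩ = _
        rw [h, P.map_add]
      map_smul' := fun c x => by
        have h : (⟨((c • x : Dc) : H), hDc (c • x).2⟩ : P.domain)
            = c • ⟨(x : H), hDc x.2⟩ := by ext; rfl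
        show P ⟨((c • x : Dc) : H), hDc (c • x).2⟩ = _
        rw [h, P.map_smul]; rfl }
  have hP'def : ∀ (x : H) (hx : x ∈ Dc), P' ⟨x, hx⟩ = P ⟨x, hDc hx⟩ := fun _ _ => rfl
  have hPcong : ∀ (a b : H) (ha : a ∈ Dc) (hb : b ∈ Dc), a = b →
      P' ⟨a, ha⟩ = P' ⟨b, hb⟩ := by
    rintro a b ha hb rfl; rfl
  -- powers of Q preserve Dc
  have hQpow : ∀ (n : ℕ) (x : H), x ∈ Dc → (Q^n) x ∈ Dc := by
    intro n
    induction n with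
    | zero => intro x hx; simpa using hx
    | succ n ih =>
      intro x hx
      have h : (Q^(n+1)) x = (Q^n) (Q x) := by
        rw [pow_succ]; rfl
      rw [h]; exact ih _ (hQDc x hx)
  -- commutation relation for powers
  have hcomm : ∀ (n : ℕ) (x : H) (hx : x ∈ Dc),
      P' ⟨(Q^(n+1)) x, hQpow (n+1) x hx⟩
        = (Q^(n+1)) (P' ⟨x, hx⟩) - (Complex.I * ((n : ℂ) + 1)) • (Q^n) x := by
    intro n
    induction n with
    | zero =>
      intro x hx
      have h1 := hccr x hx
      have h2 : P' ⟨(Q^1) x, hQpow 1 x hx⟩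
          = P' ⟨Q x, hQDc x hx⟩ := hPcong _ _ _ _ (by rw [pow_one])
      rw [h2, hP'def]
      have h3 : P ⟨Q x, hDc (hQDc x hx)⟩ = Q (P ⟨x, hDc hx⟩) - Complex.I • x := by
        rw [← h1]; abel
      rw [h3, hP'def]
      simp
    | succ n ih =>
      intro x hx
      have e1 : (Q^(n+2)) x = (Q^(n+1)) (Q x) := by
        rw [pow_succ]; rfl
      have e2 : P' ⟨(Q^(n+2)) x, hQpow (n+2) x hx⟩
          = P' ⟨(Q^(n+1)) (Q x), hQpow (n+1) (Q x) (hQDc x hx)⟩ :=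
        hPcong _ _ _ _ e1
      rw [e2, ih (Q x) (hQDc x hx)]
      have e3 : P' ⟨Q x, hQDc x hx⟩ = Q (P' ⟨x, hx⟩) - Complex.I • x := by
        rw [hP'def, hP'def, ← hccr x hx]; abel
      rw [e3]
      have e4 : (Q^(n+1)) (Q (P' ⟨x, hx⟩)) = (Q^(n+2)) (P' ⟨x, hx⟩) := by
        rw [pow_succ]; rfl
      have e5 : (Q^n) (Q x) = (Q^(n+1)) x := by
        rw [pow_succ]; rfl
      rw [map_sub, map_smul, e4, e5]
      push_cast
      rw [sub_sub, ← add_smul]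
      ring_nf
  -- main analytic lemma: `Uop Q β` maps `Dc` to itself and conjugation shifts `P` by `-β`
  have key : ∀ (β : ℝ) (x : H) (hx : x ∈ Dc),
      ∃ h : Uop Q β x ∈ Dc,
        P' ⟨Uop Q β x, h⟩ = Uop Q β (P' ⟨x, hx⟩) - ((β : ℂ)) • Uop Q β x := by
    intro β x hx
    set c : ℂ := -(Complex.I * (β : ℂ)) with hc
    -- terms of the exponential series, as elements of Dc
    set w : ℕ → Dc := fun n =>
      (((Nat.factorial n : ℂ))⁻¹ * c^n) • (⟨(Q^n) x, hQpow n x hx⟩ : Dc) with hwdef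
    have hw : ∀ n, ((w n : H)) = (((Nat.factorial n : ℂ))⁻¹ * c^n) • (Q^n) x := fun n => rfl
    have hg : HasSum (fun n => ((w n : H))) (Uop Q β x) := by
      have := Uop_hasSum Q β x
      rw [← hc] at this
      exact this
    have hgP : HasSum (fun n => (((Nat.factorial n : ℂ))⁻¹ * c^n) • (Q^n) (P' ⟨x, hx⟩))
        (Uop Q β (P' ⟨x, hx⟩)) := by
      have := Uop_hasSum Q β (P' ⟨x, hx⟩)
      rw [← hc] at this
      exact this
    -- the correction series
    set u : ℕ → H := fun n =>
      (((Nat.factorial n : ℂ))⁻¹ * c^n * (Complex.I * (n : ℂ))) • (Q^(n-1)) x with hudef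
    have hu : HasSum u (((β : ℂ)) • Uop Q β x) := by
      have h1 : HasSum (fun n => (Complex.I * c) • ((w n : H)))
          ((Complex.I * c) • Uop Q β x) := hg.const_smul _
      have hIc : Complex.I * c = (β : ℂ) := by
        rw [hc]; ring_nf; rw [Complex.I_sq]; ring
      rw [hIc] at h1
      have h2 : (fun n => u (n + 1)) = fun n => ((β : ℂ)) • ((w n : H)) := by
        funext n
        rw [hudef]
        simp only [Nat.add_sub_cancel]
        rw [hw, smul_smul, ← hIc]
        congr 1
        rw [Nat.factorial_succ]
        push_cast
        have hne : ((n : ℂ) + 1) ≠ 0 := Nat.cast_add_one_ne_zero n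
        have hfacne : ((Nat.factorial n : ℂ)) ≠ 0 := by
          exact_mod_cast Nat.cast_ne_zero.mpr (Nat.factorial_ne_zero n)
        field_simp
        ring
      have h3 : HasSum (fun n => u (n + 1))
          ((((β : ℂ)) • Uop Q β x) - ∑ i ∈ Finset.range 1, u i) := by
        rw [h2]
        have : ∑ i ∈ Finset.range 1, u i = 0 := by
          simp [hudef]
        rw [this, sub_zero]
        exact h1
      exact (hasSum_nat_add_iff' 1).mp h3
    -- identify the series for `P'` of the partial sums
    have hPw : ∀ n, P' (w n)
        = (((Nat.factorial n : ℂ))⁻¹ * c^n) • (Q^n) (P' ⟨x, hx⟩) - u n := by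
      intro n
      cases n with
      | zero =>
        rw [hwdef, hudef]
        simp
      | succ n =>
        rw [hwdef]
        simp only [map_smul]
        rw [hcomm n x hx]
        rw [hudef]
        simp only [Nat.add_sub_cancel]
        rw [smul_sub, smul_smul]
        push_cast
        ring_nf
    have hPsum : HasSum (fun n => P' (w n))
        (Uop Q β (P' ⟨x, hx⟩) - ((β : ℂ)) • Uop Q β x) := by
      have h := hgP.sub hu
      have he : (fun n => P' (w n))
          = fun n => ((((Nat.factorial n : ℂ))⁻¹ * c^n) • (Q^n) (P' ⟨x, hx⟩)) - u n :=
        funext hPw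
      rw [he]
      exact h
    -- pass to the limit in the closed graph
    have hmemS : ∀ s : Finset ℕ,
        (((↑(∑ n ∈ s, w n) : H), P' (∑ n ∈ s, w n)) : H × H)
          ∈ {p : H × H | ∃ hp : p.1 ∈ Dc, P ⟨p.1, hDc hp⟩ = p.2} := by
      intro s
      exact ⟨(∑ n ∈ s, w n).2, rfl⟩
    have htend : Filter.Tendsto
        (fun s : Finset ℕ => (((↑(∑ n ∈ s, w n) : H), P' (∑ n ∈ s, w n)) : H × H))
        Filter.atTop
        (nhds (Uop Q β x, Uop Q β (P' ⟨x, hx⟩) - ((β : ℂ)) • Uop Q β x)) := by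
      refine Filter.Tendsto.prodMk_nhds ?_ ?_
      · have hcoe : ∀ s : Finset ℕ, ((↑(∑ n ∈ s, w n) : H)) = ∑ n ∈ s, ((w n : H)) := by
          intro s
          exact_mod_cast rfl
        have := hg
        rw [HasSum] at this
        refine this.congr' ?_
        exact Filter.Eventually.of_forall fun s => (hcoe s).symm
      · have hsum : ∀ s : Finset ℕ, P' (∑ n ∈ s, w n) = ∑ n ∈ s, P' (w n) := by
          intro s
          exact map_sum P' w s
        have := hPsum
        rw [HasSum] at this
        refine this.congr' ?_
        exact Filter.Eventually.of_forall fun s => (hsum s).symm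
    have hlim := hclosed.mem_of_tendsto htend (Filter.Eventually.of_forall hmemS)
    obtain ⟨h1, h2⟩ := hlim
    exact ⟨h1, h2⟩
  -- shifting an eigenvalue by an invariance parameter
  have shift : ∀ β : ℝ, IsInvParam Q P Dc β → ∀ p : ℝ, p ∈ S → (p - β) ∈ S := by
    rintro β hβ p ⟨φ, hφ, hne, heig⟩
    have hUdom : Uop Q β φ ∈ P.domain := by
      by_cases hmem : φ ∈ Dc
      · exact hDc (key β φ hmem).1
      · exact (hβ φ hφ hmem).1
    refine ⟨Uop Q β φ, hUdom, Uop_ne_zero Q β hne, ?_⟩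
    apply hDcdense.eq_of_inner_right (𝕜 := ℂ)
    intro ψ' hψ'
    let ψ : Dc := ⟨ψ', hψ'⟩
    show ⟪(ψ : H), _⟫ = ⟪(ψ : H), _⟫
    obtain ⟨h2, hkey⟩ := key (-β) (↑ψ) ψ.2
    -- notation
    have hadj := Uop_adjoint Q hQ β
    have step1 : ⟪(ψ : H), P ⟨Uop Q β φ, hUdom⟩⟫
        = ⟪P ⟨(ψ : H), hDc ψ.2⟩, Uop Q β φ⟫ :=
      (hPsymm ⟨(ψ : H), hDc ψ.2⟩ ⟨Uop Q β φ, hUdom⟩).symm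
    have step2 : ⟪P ⟨(ψ : H), hDc ψ.2⟩, Uop Q β φ⟫
        = ⟪Uop Q (-β) (P ⟨(ψ : H), hDc ψ.2⟩), φ⟫ := by
      rw [← hadj, ContinuousLinearMap.adjoint_inner_left]
    have step3 : Uop Q (-β) (P ⟨(ψ : H), hDc ψ.2⟩)
        = P ⟨Uop Q (-β) (↑ψ), hDc h2⟩ - ((β : ℂ)) • Uop Q (-β) (↑ψ) := by
      have := hkey
      rw [hP'def, hP'def] at this
      rw [this, Complex.ofReal_neg, neg_smul]
      abel
    have step4 : ⟪P ⟨Uop Q (-β) (↑ψ), hDc h2⟩, φ⟫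
        = ((p : ℂ)) * ⟪Uop Q (-β) (↑ψ), φ⟫ := by
      rw [hPsymm ⟨Uop Q (-β) (↑ψ), hDc h2⟩ ⟨φ, hφ⟩]
      show ⟪Uop Q (-β) (↑ψ), (P ⟨φ, hφ⟩ : H)⟫ = _
      rw [heig, inner_smul_right]
    have step5 : ⟪Uop Q (-β) (↑ψ : H), φ⟫ = ⟪(ψ : H), Uop Q β φ⟫ := by
      rw [← hadj, ContinuousLinearMap.adjoint_inner_left]
    calc ⟪(ψ : H), P ⟨Uop Q β φ, hUdom⟩⟫
        = ⟪Uop Q (-β) (P ⟨(ψ : H), hDc ψ.2⟩), φ⟫ := by rw [step1, step2]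
      _ = ⟪P ⟨Uop Q (-β) (↑ψ), hDc h2⟩, φ⟫
            - ⟪((β : ℂ)) • Uop Q (-β) (↑ψ : H), φ⟫ := by rw [step3, inner_sub_left]
      _ = ((p : ℂ)) * ⟪(ψ : H), Uop Q β φ⟫
            - ((β : ℂ)) * ⟪(ψ : H), Uop Q β φ⟫ := by
          rw [step4, step5, inner_smul_left, step5, Complex.conj_ofReal]
      _ = ⟪(ψ : H), (((p - β : ℝ) : ℂ)) • Uop Q β φ⟫ := by
          rw [inner_smul_right]
          push_cast
          ring
  -- iterate the shifts
  obtain ⟨φ₀, hφ₀, p₀, hφ₀ne, hφ₀eig⟩ := hpoint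
  have hbase : p₀ ∈ S := ⟨φ₀, hφ₀, hφ₀ne, hφ₀eig⟩
  have hiter : ∀ n : ℕ, (p₀ - n * β₀) ∈ S ∧ (p₀ + n * β₀) ∈ S := by
    intro n
    induction n with
    | zero =>
      simp only [Nat.cast_zero, zero_mul, sub_zero, add_zero]
      exact ⟨hbase, hbase⟩
    | succ n ih =>
      constructor
      · have h := shift β₀ hβ₀ _ ih.1
        have : p₀ - n * β₀ - β₀ = p₀ - (n + 1 : ℕ) * β₀ := by push_cast; ring
        rwa [this] at h
      · have h := shift (-β₀) hβ₀' _ ih.2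
        have : p₀ + n * β₀ - (-β₀) = p₀ + (n + 1 : ℕ) * β₀ := by push_cast; ring
        rwa [this] at h
  have habs : ∀ M : ℝ, ∃ p ∈ S, M < p := by
    intro M
    rcases lt_or_gt_of_ne hβ₀ne with hlt | hgt
    · obtain ⟨n, hn⟩ := exists_nat_gt ((M - p₀) / (-β₀))
      refine ⟨p₀ - n * β₀, (hiter n).1, ?_⟩
      have h1 : (M - p₀) / (-β₀) < n := hn
      have h2 : M - p₀ < n * (-β₀) := by
        rw [div_lt_iff₀ (by linarith)] at h1
        linarith
      linarith
    · obtain ⟨n, hn⟩ := exists_nat_gt ((M - p₀) / β₀)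
      refine ⟨p₀ + n * β₀, (hiter n).2, ?_⟩
      have h2 : M - p₀ < n * β₀ := by
        rw [div_lt_iff₀ hgt] at hn
        linarith
      linarith
  have habs' : ∀ M : ℝ, ∃ p ∈ S, p < M := by
    intro M
    rcases lt_or_gt_of_ne hβ₀ne with hlt | hgt
    · obtain ⟨n, hn⟩ := exists_nat_gt ((p₀ - M) / (-β₀))
      refine ⟨p₀ + n * β₀, (hiter n).2, ?_⟩
      have h2 : p₀ - M < n * (-β₀) := by
        rw [div_lt_iff₀ (by linarith)] at hn
        linarith
      linarith
    · obtain ⟨n, hn⟩ := exists_nat_gt ((p₀ - M) / β₀)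
      refine ⟨p₀ - n * β₀, (hiter n).1, ?_⟩
      have h2 : p₀ - M < n * β₀ := by
        rw [div_lt_iff₀ hgt] at hn
        linarith
      linarith
  constructor
  · rintro ⟨M, hM⟩
    obtain ⟨p, hp, hMp⟩ := habs M
    exact absurd (hM hp) (not_le.mpr hMp)
  · rintro ⟨M, hM⟩
    obtain ⟨p, hp, hMp⟩ := habs' M
    exact absurd (hM hp) (not_le.mpr hMp)
end

section
/- Let H be a complex Hilbert space, Q : H →L[ℂ] H a continuous (bounded, everywhere-defined) linear map, and P : H →ₗ.[ℂ] H an unbounded operator. Let D_a be a submodule of H with D_a ≤ P.domain such that: (1) Q maps D_a into D_a; (2) P maps D_a into D_a (for every φ ∈ D_a, P φ ∈ D_a); (3) Q (P φ) − P (Q φ) = Complex.I • φ for all φ ∈ D_a; (4) the graph of the restriction of P to D_a, {(φ, P φ) : φ ∈ D_a}, is closed in H × H; (5) every φ ∈ D_a is an analytic vector of P, i.e. there exists s > 0 such that the series ∑_n ‖Pⁿ φ‖ * sⁿ / n! is summable, where Pⁿ φ denotes the n-th iterate of P applied to φ (well defined because P maps D_a into itself). Then D_a = ⊥. (There is no nontrivial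 invariant domain of analytic vectors of P on which P is canonically conjugate to a bounded Q; hence the roles of Q and P in the commutation relation for the unitary group cannot be interchanged.) -/
/-- The `n`-th iterate of the unbounded operator `P` on an invariant subdomain `Da`. -/
noncomputable def pmapIter {H : Type*} [NormedAddCommGroup H] [InnerProductSpace ℂ H]
    (P : H →ₗ.[ℂ] H) (Da : Submodule ℂ H) (hDa : Da ≤ P.domain)
    (hP : ∀ φ : H, ∀ h : φ ∈ Da, P ⟨φ, hDa h⟩ ∈ Da) : ℕ → Da → Da
  | 0, x => x
  | n + 1, x =>
    let y := pmapIter P Da hDa hP n x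
    ⟨P ⟨(y : H), hDa y.2⟩, hP (y : H) y.2⟩

namespace NoCCRAux

variable {H : Type*} [NormedAddCommGroup H] [InnerProductSpace ℂ H]
variable (P : H →ₗ.[ℂ] H) (Da : Submodule ℂ H) (hDa : Da ≤ P.domain)

/-- The graph of `P` restricted to `Da`, as a submodule of `H × H`. -/
def G : Submodule ℂ (H × H) where
  carrier := {p : H × H | ∃ hp : p.1 ∈ Da, P ⟨p.1, hDa hp⟩ = p.2}
  add_mem' := by
    rintro ⟨x1, x2⟩ ⟨y1, y2⟩ ⟨hx, ex⟩ ⟨hy, ey⟩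
    refine ⟨Da.add_mem hx hy, ?_⟩
    show P ((⟨x1, hDa hx⟩ : P.domain) + ⟨y1, hDa hy⟩) = x2 + y2
    rw [P.map_add, ex, ey]
  zero_mem' := by
    refine ⟨Da.zero_mem, ?_⟩
    show P (0 : P.domain) = (0 : H)
    rw [P.map_zero]
  smul_mem' := by
    rintro c ⟨x1, x2⟩ ⟨hx, ex⟩
    refine ⟨Da.smul_mem c hx, ?_⟩
    show P (c • (⟨x1, hDa hx⟩ : P.domain)) = c • x2
    rw [P.map_smul, ex]

variable {P Da hDa}

lemma mem1 (p : G P Da hDa) : (p : H × H).1 ∈ Da := by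
  obtain ⟨h, _⟩ := p.2; exact h

lemma eq2 (p : G P Da hDa) : P ⟨(p : H × H).1, hDa (mem1 p)⟩ = (p : H × H).2 := by
  obtain ⟨h, e⟩ := p.2; exact e

lemma mem2 (hP : ∀ φ : H, ∀ h : φ ∈ Da, P ⟨φ, hDa h⟩ ∈ Da)
    (p : G P Da hDa) : (p : H × H).2 ∈ Da := by
  have := hP (p : H × H).1 (mem1 p)
  rwa [eq2 p] at this

/-- The operator induced by `P` on its own (restricted) graph, as a linear map. -/
def Phat (hP : ∀ φ : H, ∀ h : φ ∈ Da, P ⟨φ, hDa h⟩ ∈ Da) :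
    G P Da hDa →ₗ[ℂ] G P Da hDa where
  toFun p := ⟨((p : H × H).2, P ⟨(p : H × H).2, hDa (mem2 hP p)⟩), ⟨mem2 hP p, rfl⟩⟩
  map_add' p q := by
    apply Subtype.ext
    apply Prod.ext
    · rfl
    · show P _ = P _ + P _
      have h : (⟨(p : H × H).2 + (q : H × H).2,
          hDa (mem2 hP (p + q))⟩ : P.domain)
          = ⟨(p : H × H).2, hDa (mem2 hP p)⟩ + ⟨(q : H × H).2, hDa (mem2 hP q)⟩ := rfl
      rw [← P.map_add]
      rfl
  map_smul' c p := by
    apply Subtype.ext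
    apply Prod.ext
    · rfl
    · show P _ = c • P _
      rw [← P.map_smul]
      rfl


variable [CompleteSpace H]

/-- The operator induced by `P` on its graph, as a continuous linear map
(via the closed graph theorem). -/
noncomputable def Bop (hP : ∀ φ : H, ∀ h : φ ∈ Da, P ⟨φ, hDa h⟩ ∈ Da)
    (hcl : IsClosed ((G P Da hDa : Submodule ℂ (H × H)) : Set (H × H)))
    (hgr : IsClosed ((Phat (P := P) (Da := Da) (hDa := hDa) hP).graph :
      Set (G P Da hDa × G P Da hDa))) :
    G P Da hDa →L[ℂ] G P Da hDa :=
  haveI : CompleteSpace (G P Da hDa) := hcl.completeSpace_coe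
  ContinuousLinearMap.ofIsClosedGraph hgr

lemma Bop_apply (hP) (hcl) (hgr) (p : G P Da hDa) :
    Bop (P := P) (Da := Da) (hDa := hDa) hP hcl hgr p = Phat hP p := by
  haveI : CompleteSpace (G P Da hDa) := hcl.completeSpace_coe
  exact congrFun (ContinuousLinearMap.coeFn_ofIsClosedGraph hgr) p

variable (Q : H →L[ℂ] H)

/-- The bounded operator on `H × H` induced by `Q` (acting on graph elements). -/
noncomputable def Qhat0 : H × H →L[ℂ] H × H :=
  Q.prodMap Q - Complex.I •
    ((ContinuousLinearMap.inr ℂ H H).comp (ContinuousLinearMap.fst ℂ H H))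

lemma Qhat0_apply (p : H × H) :
    Qhat0 Q p = (Q p.1, Q p.2 - Complex.I • p.1) := by
  simp [Qhat0, Prod.ext_iff]

lemma Qhat0_mem (hQDa : ∀ φ ∈ Da, Q φ ∈ Da)
    (hccr : ∀ φ (hφ : φ ∈ Da),
      Q (P ⟨φ, hDa hφ⟩) - P ⟨Q φ, hDa (hQDa φ hφ)⟩ = Complex.I • φ)
    (p : G P Da hDa) : Qhat0 Q (p : H × H) ∈ G P Da hDa := by
  rw [Qhat0_apply]
  refine ⟨hQDa _ (mem1 p), ?_⟩
  have h := hccr (p : H × H).1 (mem1 p)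
  rw [eq2 p] at h
  rw [← h, sub_sub_cancel]

variable (hQDa : ∀ φ ∈ Da, Q φ ∈ Da)
variable (hccr : ∀ φ (hφ : φ ∈ Da),
      Q (P ⟨φ, hDa hφ⟩) - P ⟨Q φ, hDa (hQDa φ hφ)⟩ = Complex.I • φ)

/-- The operator induced by `Q` on the graph of `P`. -/
noncomputable def Aop : G P Da hDa →L[ℂ] G P Da hDa where
  toFun p := ⟨Qhat0 Q (p : H × H), Qhat0_mem (hDa := hDa) Q hQDa hccr p⟩
  map_add' p q := by
    apply Subtype.ext
    show Qhat0 Q ((p : H × H) + (q : H × H)) = Qhat0 Q (p : H × H) + Qhat0 Q (q : H × H)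
    rw [map_add]
  map_smul' c p := by
    apply Subtype.ext
    show Qhat0 Q (c • (p : H × H)) = c • Qhat0 Q (p : H × H)
    rw [map_smul]
  cont := by
    apply Continuous.subtype_mk
    exact (Qhat0 Q).continuous.comp continuous_subtype_val

lemma Aop_coe (p : G P Da hDa) :
    ((Aop (hDa := hDa) Q hQDa hccr p : G P Da hDa) : H × H)
      = (Q (p : H × H).1, Q (p : H × H).2 - Complex.I • (p : H × H).1) :=
  Qhat0_apply Q _

lemma Phat_coe (hP) (p : G P Da hDa) :
    ((Phat (P := P) (Da := Da) (hDa := hDa) hP p : G P Da hDa) : H × H)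
      = ((p : H × H).2, P ⟨(p : H × H).2, hDa (mem2 hP p)⟩) := rfl

lemma ccr_commutator (hP) (hcl) (hgr) :
    Aop (hDa := hDa) Q hQDa hccr * Bop (P := P) (Da := Da) (hDa := hDa) hP hcl hgr
      - Bop (P := P) (Da := Da) (hDa := hDa) hP hcl hgr * Aop (hDa := hDa) Q hQDa hccr
      = Complex.I • (1 : G P Da hDa →L[ℂ] G P Da hDa) := by
  apply ContinuousLinearMap.ext
  intro p
  have hx : (p : H × H).1 ∈ Da := mem1 p
  have hy : (p : H × H).2 ∈ Da := mem2 hP p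
  set x := (p : H × H).1 with hxdef
  set y := (p : H × H).2 with hydef
  apply Subtype.ext
  rw [ContinuousLinearMap.sub_apply, ContinuousLinearMap.mul_apply,
    ContinuousLinearMap.mul_apply, ContinuousLinearMap.smul_apply,
    ContinuousLinearMap.one_apply, Submodule.coe_sub, Submodule.coe_smul,
    Bop_apply, Bop_apply]
  have hAB : ((Aop (hDa := hDa) Q hQDa hccr (Phat hP p) : G P Da hDa) : H × H)
      = (Q y, Q (P ⟨y, hDa (mem2 hP p)⟩) - Complex.I • y) := by
    rw [Aop_coe, Phat_coe]
  have hBA : ((Phat hP (Aop (hDa := hDa) Q hQDa hccr p) : G P Da hDa) : H × H)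
      = (Q y - Complex.I • x,
          P (⟨Q y, hDa (hQDa y hy)⟩ - Complex.I • ⟨x, hDa hx⟩)) := by
    rw [Phat_coe]
    have h1 : ((Aop (hDa := hDa) Q hQDa hccr p : G P Da hDa) : H × H).2
        = Q y - Complex.I • x := by rw [Aop_coe]
    have h2 : (⟨((Aop (hDa := hDa) Q hQDa hccr p : G P Da hDa) : H × H).2,
        hDa (mem2 hP (Aop (hDa := hDa) Q hQDa hccr p))⟩ : P.domain)
        = ⟨Q y, hDa (hQDa y hy)⟩ - Complex.I • ⟨x, hDa hx⟩ := Subtype.ext h1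
    exact Prod.ext h1 (congrArg (fun t => P t) h2)
  rw [hAB, hBA, P.map_sub, P.map_smul]
  have hccy := hccr y hy
  have hPx : P ⟨x, hDa hx⟩ = y := eq2 p
  rw [hPx]
  rw [Prod.ext_iff]
  constructor
  · show Q y - (Q y - Complex.I • x) = Complex.I • x
    abel
  · show Q (P ⟨y, hDa (mem2 hP p)⟩) - Complex.I • y
        - (P ⟨Q y, hDa (hQDa y hy)⟩ - Complex.I • y) = Complex.I • y
    rw [sub_sub_sub_cancel_right]
    exact hccr y hy


end NoCCRAux

set_option synthInstance.maxHeartbeats 1000000 in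
set_option maxHeartbeats 2000000 in
theorem no_nontrivial_invariant_analytic_domain
    {H : Type*} [NormedAddCommGroup H] [InnerProductSpace ℂ H] [CompleteSpace H]
    (Q : H →L[ℂ] H) (P : H →ₗ.[ℂ] H)
    (Da : Submodule ℂ H) (hDa : Da ≤ P.domain)
    (hQDa : ∀ φ ∈ Da, Q φ ∈ Da)
    (hPDa : ∀ φ : H, ∀ h : φ ∈ Da, P ⟨φ, hDa h⟩ ∈ Da)
    (hccr : ∀ φ (hφ : φ ∈ Da),
      Q (P ⟨φ, hDa hφ⟩) - P ⟨Q φ, hDa (hQDa φ hφ)⟩ = Complex.I • φ)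
    (hclosed : IsClosed {p : H × H | ∃ hp : p.1 ∈ Da, P ⟨p.1, hDa hp⟩ = p.2})
    (hanalytic : ∀ φ : H, ∀ hφ : φ ∈ Da, ∃ s > (0 : ℝ),
      Summable fun n : ℕ =>
        ‖(pmapIter P Da hDa hPDa n ⟨φ, hφ⟩ : H)‖ * s ^ n / (n.factorial : ℝ)) :
    Da = ⊥ := by
  classical
  open NoCCRAux in
  -- the graph submodule is a complete space
  have hGclosed : IsClosed ((G P Da hDa : Submodule ℂ (H × H)) : Set (H × H)) := hclosed
  haveI : CompleteSpace (G P Da hDa) := hGclosed.completeSpace_coe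
  -- P induces a continuous linear operator B on the graph
  have hgraph : IsClosed ((Phat (P := P) (Da := Da) (hDa := hDa) hPDa).graph :
      Set (G P Da hDa × G P Da hDa)) := by
    have hset : ((Phat (P := P) (Da := Da) (hDa := hDa) hPDa).graph :
        Set (G P Da hDa × G P Da hDa))
        = {pq | ((pq.1 : H × H)).2 = ((pq.2 : H × H)).1} := by
      ext ⟨p, q⟩
      simp only [LinearMap.mem_graph_iff, Set.mem_setOf_eq]
      constructor
      · intro h
        rw [show q = Phat hPDa p from h]
        rfl
      · intro h
        have key : q = Phat hPDa p := by
          apply Subtype.ext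
          apply Prod.ext
          · exact h.symm
          · show (q : H × H).2 = P _
            have hc : (⟨(q : H × H).1, hDa (mem1 q)⟩ : P.domain)
                = ⟨((p : H × H)).2, hDa (mem2 hPDa p)⟩ := Subtype.ext h.symm
            rw [← eq2 q, hc]
        exact key
    rw [hset]
    exact isClosed_eq
      (Continuous.comp continuous_snd ((continuous_subtype_val).comp continuous_fst))
      (Continuous.comp continuous_fst ((continuous_subtype_val).comp continuous_snd))
  -- the two bounded operators on the graph
  set A : G P Da hDa →L[ℂ] G P Da hDa := Aop (hDa := hDa) Q hQDa hccr with hA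
  set B : G P Da hDa →L[ℂ] G P Da hDa :=
    Bop (P := P) (Da := Da) (hDa := hDa) hPDa hGclosed hgraph with hB
  have hcomm : A * B - B * A = Complex.I • (1 : G P Da hDa →L[ℂ] G P Da hDa) :=
    ccr_commutator (hDa := hDa) Q hQDa hccr hPDa hGclosed hgraph
  -- Wielandt's argument, carried out at the level of vectors
  have hcomm' : ∀ q : G P Da hDa, A (B q) - B (A q) = Complex.I • q := by
    intro q
    have h := congrArg (fun T : G P Da hDa →L[ℂ] G P Da hDa => T q) hcomm
    simpa using h
  have hpow : ∀ (k : ℕ) (q : G P Da hDa), (B ^ (k + 1)) q = B ((B ^ k) q) := by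
    intro k q
    rw [pow_succ', ContinuousLinearMap.mul_apply]
  have key : ∀ (n : ℕ) (p : G P Da hDa),
      A ((B ^ (n + 1)) p) - (B ^ (n + 1)) (A p)
        = (((n : ℂ) + 1) * Complex.I) • ((B ^ n) p) := by
    intro n
    induction n with
    | zero =>
      intro p
      have := hcomm' p
      simpa [hpow 0 p, hpow 0 (A p)] using this
    | succ n ih =>
      intro p
      have hq : (B ^ (n + 2)) p = B ((B ^ (n + 1)) p) := hpow (n + 1) p
      have hq' : (B ^ (n + 2)) (A p) = B ((B ^ (n + 1)) (A p)) := hpow (n + 1) (A p)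
      calc A ((B ^ (n + 2)) p) - (B ^ (n + 2)) (A p)
          = (A (B ((B ^ (n + 1)) p)) - B (A ((B ^ (n + 1)) p)))
            + B (A ((B ^ (n + 1)) p) - (B ^ (n + 1)) (A p)) := by
            rw [hq, hq', map_sub]; abel
        _ = Complex.I • ((B ^ (n + 1)) p)
            + B ((((n : ℂ) + 1) * Complex.I) • ((B ^ n) p)) := by
            rw [hcomm' ((B ^ (n + 1)) p), ih p]
        _ = Complex.I • ((B ^ (n + 1)) p)
            + (((n : ℂ) + 1) * Complex.I) • (B ((B ^ n) p)) := by rw [map_smul]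
        _ = ((((n + 1 : ℕ) : ℂ) + 1) * Complex.I) • ((B ^ (n + 1)) p) := by
            rw [show B ((B ^ n) p) = (B ^ (n + 1)) p from (hpow n p).symm, ← add_smul]
            congr 1
            push_cast
            ring
  have norm_ineq : ∀ n : ℕ, ((n : ℝ) + 1) * ‖B ^ n‖ ≤ 2 * ‖A‖ * ‖B‖ * ‖B ^ n‖ := by
    intro n
    have hBn1 : ‖B ^ (n + 1)‖ ≤ ‖B‖ * ‖B ^ n‖ := by
      rw [pow_succ']
      exact norm_mul_le (α := (G P Da hDa) →L[ℂ] (G P Da hDa)) B (B ^ n)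
    have hb : ∀ p : G P Da hDa,
        ((n : ℝ) + 1) * ‖(B ^ n) p‖ ≤ 2 * ‖A‖ * ‖B ^ (n + 1)‖ * ‖p‖ := by
      intro p
      have h1 : ‖(((n : ℂ) + 1) * Complex.I) • ((B ^ n) p)‖ = ((n : ℝ) + 1) * ‖(B ^ n) p‖ := by
        have e := norm_smul (((n : ℂ) + 1) * Complex.I) ((B ^ n) p)
        rw [e, norm_mul, Complex.norm_I, mul_one,
          show ((n : ℂ) + 1) = ((n + 1 : ℕ) : ℂ) by push_cast; ring, Complex.norm_natCast]
        push_cast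
        ring
      have h2 : ‖A ((B ^ (n + 1)) p)‖ ≤ ‖A‖ * (‖B ^ (n + 1)‖ * ‖p‖) :=
        le_trans (A.le_opNorm _)
          (mul_le_mul_of_nonneg_left ((B ^ (n + 1)).le_opNorm p) (norm_nonneg A))
      have h3 : ‖(B ^ (n + 1)) (A p)‖ ≤ ‖B ^ (n + 1)‖ * (‖A‖ * ‖p‖) :=
        le_trans ((B ^ (n + 1)).le_opNorm _)
          (mul_le_mul_of_nonneg_left (A.le_opNorm p) (norm_nonneg _))
      calc ((n : ℝ) + 1) * ‖(B ^ n) p‖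
          = ‖(((n : ℂ) + 1) * Complex.I) • ((B ^ n) p)‖ := h1.symm
        _ = ‖A ((B ^ (n + 1)) p) - (B ^ (n + 1)) (A p)‖ := by rw [key n p]
        _ ≤ ‖A ((B ^ (n + 1)) p)‖ + ‖(B ^ (n + 1)) (A p)‖ := norm_sub_le _ _
        _ ≤ ‖A‖ * (‖B ^ (n + 1)‖ * ‖p‖) + ‖B ^ (n + 1)‖ * (‖A‖ * ‖p‖) :=
            add_le_add h2 h3
        _ = 2 * ‖A‖ * ‖B ^ (n + 1)‖ * ‖p‖ := by ring
    have hpos : (0 : ℝ) < (n : ℝ) + 1 := by positivity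
    have hop : ‖B ^ n‖ ≤ 2 * ‖A‖ * ‖B ^ (n + 1)‖ / ((n : ℝ) + 1) := by
      refine ContinuousLinearMap.opNorm_le_bound _ (by positivity) fun p => ?_
      rw [div_mul_eq_mul_div, le_div_iff₀ hpos]
      have := hb p
      nlinarith [this]
    have hA0 : (0 : ℝ) ≤ ‖A‖ := norm_nonneg A
    have h4 : ((n : ℝ) + 1) * ‖B ^ n‖ ≤ 2 * ‖A‖ * ‖B ^ (n + 1)‖ := by
      have := mul_le_mul_of_nonneg_left hop (le_of_lt hpos)
      rwa [mul_div_cancel₀ _ (ne_of_gt hpos)] at this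
    calc ((n : ℝ) + 1) * ‖B ^ n‖ ≤ 2 * ‖A‖ * ‖B ^ (n + 1)‖ := h4
      _ ≤ 2 * ‖A‖ * (‖B‖ * ‖B ^ n‖) := by
          exact mul_le_mul_of_nonneg_left hBn1 (by positivity)
      _ = 2 * ‖A‖ * ‖B‖ * ‖B ^ n‖ := by ring
  obtain ⟨N, hN⟩ : ∃ N : ℕ, 2 * ‖A‖ * ‖B‖ < (N : ℝ) + 1 := by
    obtain ⟨N, hN⟩ := exists_nat_gt (2 * ‖A‖ * ‖B‖)
    exact ⟨N, lt_of_lt_of_le hN (by linarith)⟩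
  have hBN : B ^ N = 0 := by
    by_contra hne
    have h0 : ‖B ^ N‖ ≠ 0 := fun h => hne ((ContinuousLinearMap.opNorm_zero_iff _).mp h)
    have hpos : 0 < ‖B ^ N‖ :=
      lt_of_le_of_ne (ContinuousLinearMap.opNorm_nonneg _) (Ne.symm h0)
    have := norm_ineq N
    nlinarith
  have down : ∀ n : ℕ, B ^ (n + 1) = 0 → B ^ n = 0 := by
    intro n h
    apply ContinuousLinearMap.ext
    intro p
    have hk := key n p
    rw [h] at hk
    simp only [ContinuousLinearMap.zero_apply, map_zero, sub_zero] at hk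
    have hc : (((n : ℂ) + 1) * Complex.I) ≠ 0 :=
      mul_ne_zero (Nat.cast_add_one_ne_zero n) Complex.I_ne_zero
    rcases smul_eq_zero.mp hk.symm with h' | h'
    · exact absurd h' hc
    · simpa using h'
  have hone : (1 : G P Da hDa →L[ℂ] G P Da hDa) = 0 := by
    have haux : ∀ n : ℕ, B ^ n = 0 → B ^ 0 = 0 := by
      intro n
      induction n with
      | zero => exact id
      | succ n ih => intro h; exact ih (down n h)
    have := haux N hBN
    rwa [pow_zero] at this
  -- conclude that `Da` is trivial
  rw [Submodule.eq_bot_iff]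
  intro x hx
  have hxG : ((x, P ⟨x, hDa hx⟩) : H × H) ∈ G P Da hDa := ⟨hx, rfl⟩
  have hp0 : (⟨(x, P ⟨x, hDa hx⟩), hxG⟩ : G P Da hDa) = 0 := by
    have h1 : (1 : G P Da hDa →L[ℂ] G P Da hDa) (⟨(x, P ⟨x, hDa hx⟩), hxG⟩ : G P Da hDa)
        = (0 : G P Da hDa →L[ℂ] G P Da hDa) (⟨(x, P ⟨x, hDa hx⟩), hxG⟩ : G P Da hDa) := by
      rw [hone]
    simpa using h1
  have := congrArg (fun q : G P Da hDa => ((q : H × H)).1) hp0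
  simpa using this
end
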